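/- Let X₁, X₂, … be an i.i.d. sequence of real random variables on a probability space such that E(X₁) > 0 and such that there exists ε > 0 with E(exp(λX₁)) < ∞ for all λ with |λ| < ε. Let Sₙ = X₁ + ⋯ + Xₙ. Then there exists a constant c > 0 such that for every k > 0, P(∃ n ≥ 1 with Sₙ ≤ −k) ≤ exp(−ck). -/

import Mathlib

open MeasureTheory ProbabilityTheory Real Filter Topology Metric
open scoped ENNReal NNReal

lemma exists_exp_neg_lt_one {Ω : Type*} [MeasurableSpace Ω] (P : Measure Ω)
    [IsProbabilityMeasure P] (Y : Ω → ℝ) (hY : Measurable Y)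
    (hmean : 0 < ∫ ω, Y ω ∂P) {ε : ℝ} (hε : 0 < ε)
    (hint : ∀ t : ℝ, |t| < ε → Integrable (fun ω => Real.exp (t * Y ω)) P) :
    ∃ c : ℝ, 0 < c ∧ c < ε ∧ ∫ ω, Real.exp (-c * Y ω) ∂P < 1 := by
  set δ : ℝ := ε / 2 with hδ
  have hδ0 : 0 < δ := by positivity
  set a : ℝ := 3 * ε / 4 with ha
  have ha0 : 0 < a := by positivity
  have haε : a < ε := by rw [ha]; linarith
  -- integrable bound
  have hbound_int : Integrable (fun ω => |Y ω| * Real.exp (δ * |Y ω|)) P := by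
    have h1 : Integrable (fun ω => (2 / δ) * (Real.exp (a * Y ω) + Real.exp (-a * Y ω))) P :=
      (Integrable.add (hint a (by rwa [abs_of_pos ha0]))
        (hint (-a) (by rwa [abs_neg, abs_of_pos ha0]))).const_mul _
    refine h1.mono' ?_ ?_
    · exact (hY.abs.mul ((hY.abs.const_mul δ).exp)).aestronglyMeasurable
    · refine Filter.Eventually.of_forall fun ω => ?_
      have hy : (0:ℝ) ≤ |Y ω| := abs_nonneg _
      have h2 : |Y ω| ≤ (2 / δ) * Real.exp ((δ/2) * |Y ω|) := by
        have := Real.add_one_le_exp ((δ/2) * |Y ω|)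
        have h3 : (δ/2) * |Y ω| ≤ Real.exp ((δ/2) * |Y ω|) := by nlinarith [Real.exp_pos ((δ/2) * |Y ω|)]
        have h4 := mul_le_mul_of_nonneg_left h3 (show (0:ℝ) ≤ 2/δ by positivity)
        calc |Y ω| = (2/δ) * ((δ/2) * |Y ω|) := by field_simp
        _ ≤ (2/δ) * Real.exp ((δ/2) * |Y ω|) := h4
      have h4 : Real.exp ((δ/2) * |Y ω|) * Real.exp (δ * |Y ω|) = Real.exp ((3*δ/2) * |Y ω|) := by
        rw [← Real.exp_add]; ring_nf
      have h5 : Real.exp ((3*δ/2) * |Y ω|) ≤ Real.exp (a * Y ω) + Real.exp (-a * Y ω) := by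
        have h6 : (3*δ/2) = a := by rw [hδ, ha]; ring
        rw [h6]
        rcases abs_cases (Y ω) with ⟨h, _⟩ | ⟨h, _⟩
        · rw [h]; nlinarith [Real.exp_pos (-a * Y ω)]
        · rw [h]; have : a * -Y ω = -a * Y ω := by ring
          rw [this]; nlinarith [Real.exp_pos (a * Y ω)]
      have hnorm : ‖|Y ω| * Real.exp (δ * |Y ω|)‖ = |Y ω| * Real.exp (δ * |Y ω|) := by
        rw [Real.norm_eq_abs, abs_of_nonneg (by positivity)]
      rw [hnorm]
      calc |Y ω| * Real.exp (δ * |Y ω|) ≤ ((2 / δ) * Real.exp ((δ/2) * |Y ω|)) * Real.exp (δ * |Y ω|) := by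
            gcongr
      _ = (2/δ) * Real.exp ((3*δ/2) * |Y ω|) := by rw [mul_assoc, h4]
      _ ≤ (2 / δ) * (Real.exp (a * Y ω) + Real.exp (-a * Y ω)) := by gcongr
  -- derivative of mgf at 0
  have hderiv : HasDerivAt (fun t : ℝ => ∫ ω, Real.exp (t * Y ω) ∂P)
      (∫ ω, Real.exp ((0:ℝ) * Y ω) * Y ω ∂P) 0 := by
    refine (hasDerivAt_integral_of_dominated_loc_of_deriv_le (F := fun t ω => Real.exp (t * Y ω))
      (F' := fun t ω => Real.exp (t * Y ω) * Y ω)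
      (bound := fun ω => |Y ω| * Real.exp (δ * |Y ω|)) (Metric.ball_mem_nhds 0 hδ0) ?_ ?_ ?_ ?_ hbound_int ?_).2
    · exact Filter.Eventually.of_forall fun t =>
        ((hY.const_mul t).exp).aestronglyMeasurable
    · simpa using hint 0 (by simpa using hε)
    · exact (((hY.const_mul (0:ℝ)).exp).mul hY).aestronglyMeasurable
    · refine Filter.Eventually.of_forall fun ω => fun x hx => ?_
      have hx' : |x| < δ := by simpa [Real.dist_eq] using hx
      have : ‖Real.exp (x * Y ω) * Y ω‖ = Real.exp (x * Y ω) * |Y ω| := by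
        rw [norm_mul, Real.norm_eq_abs, Real.norm_eq_abs, abs_of_pos (Real.exp_pos _)]
      rw [this]
      show Real.exp (x * Y ω) * |Y ω| ≤ |Y ω| * Real.exp (δ * |Y ω|)
      rw [mul_comm]
      have hxy : x * Y ω ≤ δ * |Y ω| :=
        calc x * Y ω ≤ |x * Y ω| := le_abs_self _
        _ = |x| * |Y ω| := abs_mul _ _
        _ ≤ δ * |Y ω| := mul_le_mul_of_nonneg_right hx'.le (abs_nonneg _)
      exact mul_le_mul_of_nonneg_left (Real.exp_le_exp.2 hxy) (abs_nonneg _)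
    · refine Filter.Eventually.of_forall fun ω => fun x _ => ?_
      simpa [mul_comm] using ((hasDerivAt_id x).mul_const (Y ω)).exp
  have hd : (0:ℝ) < ∫ ω, Real.exp ((0:ℝ) * Y ω) * Y ω ∂P := by
    simpa using hmean
  -- find small negative t with ψ t < 1
  have hslope := hasDerivAt_iff_tendsto_slope.1 hderiv
  have hmono : 𝓝[<] (0:ℝ) ≤ 𝓝[≠] (0:ℝ) :=
    nhdsWithin_mono _ (fun x hx => ne_of_lt hx)
  have hev : ∀ᶠ t in 𝓝[<] (0:ℝ), 0 < slope (fun t : ℝ => ∫ ω, Real.exp (t * Y ω) ∂P) 0 t :=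
    (hslope.eventually (eventually_gt_nhds hd)).filter_mono hmono
  have hev2 : ∀ᶠ t in 𝓝[<] (0:ℝ), t ∈ Set.Ioo (-ε) 0 := Ioo_mem_nhdsLT_of_mem (by constructor <;> [linarith; rfl])
  obtain ⟨t, ht1, ht2⟩ := (hev.and hev2).exists
  refine ⟨-t, by simp [ht2.2], by nlinarith [ht2.1, ht2.2], ?_⟩
  have hψ0 : (∫ ω, Real.exp ((0:ℝ) * Y ω) ∂P) = 1 := by simp
  rw [slope_def_field] at ht1
  simp only [sub_zero] at ht1
  have ht0 : t < 0 := ht2.2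
  rw [div_pos_iff] at ht1
  rcases ht1 with ⟨h1, h2⟩ | ⟨h1, h2⟩
  · linarith
  · have : (∫ ω, Real.exp (t * Y ω) ∂P) - 1 < 0 := by
      rw [hψ0] at h1; linarith
    have hre : -(-t) = t := by ring
    rw [hre]
    linarith

section Aux2

variable {Ω : Type*} [m0 : MeasurableSpace Ω] (P : Measure Ω) [IsProbabilityMeasure P]
variable (X : ℕ → Ω → ℝ) (hmeas : ∀ n, Measurable (X n))

noncomputable def pastFiltration : Filtration ℕ m0 where
  seq n := ⨆ i ∈ Finset.range n, MeasurableSpace.comap (X i) inferInstance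
  mono' n m hnm := biSup_mono fun i hi =>
    Finset.mem_range.2 (lt_of_lt_of_le (Finset.mem_range.1 hi) hnm)
  le' n := iSup_le fun i => iSup_le fun _ => (hmeas i).comap_le

lemma pastFiltration_measurable {i n : ℕ} (hin : i < n) :
    Measurable[pastFiltration X hmeas n] (X i) :=
  Measurable.of_comap_le (le_biSup (fun i => MeasurableSpace.comap (X i) inferInstance)
    (Finset.mem_range.2 hin))

lemma pastFiltration_indep (hindep : iIndepFun X P) (n : ℕ) :
    Indep (MeasurableSpace.comap (X n) inferInstance) (pastFiltration X hmeas n) P := by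
  have hiI : iIndep (fun i => MeasurableSpace.comap (X i) inferInstance) P := hindep
  have h := indep_biSup_compl (fun i => (hmeas i).comap_le) hiI {i | i < n}
  have h1 : (⨆ i ∈ {i : ℕ | i < n}, MeasurableSpace.comap (X i) inferInstance)
      = pastFiltration X hmeas n := by
    simp only [pastFiltration]
    congr 1
    funext i
    simp [Finset.mem_range]
  rw [h1] at h
  refine (Indep.symm ?_)
  refine indep_of_indep_of_le_right h ?_
  exact le_biSup (fun i => MeasurableSpace.comap (X i) inferInstance)
    (by simp : n ∈ {i : ℕ | i < n}ᶜ)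

lemma supermartingale_exp_sum
    (hindep : iIndepFun X P)
    (hident : ∀ n, IdentDistrib (X n) (X 0) P P) (t : ℝ)
    (hint0 : Integrable (fun ω => Real.exp (t * X 0 ω)) P)
    (hψ : ∫ ω, Real.exp (t * X 0 ω) ∂P ≤ 1) :
    Supermartingale (fun n ω => Real.exp (t * ∑ i ∈ Finset.range n, X i ω))
      (pastFiltration X hmeas) P := by
  set 𝒢 := pastFiltration X hmeas with h𝒢
  set f : ℕ → Ω → ℝ := fun n ω => Real.exp (t * ∑ i ∈ Finset.range n, X i ω) with hf
  have hg_meas : Measurable fun y : ℝ => Real.exp (t * y) := (measurable_id.const_mul t).exp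
  have hint_i : ∀ i, Integrable (fun ω => Real.exp (t * X i ω)) P := fun i =>
    ((hident i).comp hg_meas).integrable_iff.2 hint0
  have hadp : StronglyAdapted 𝒢 f := by
    intro n
    have hsum : Measurable[𝒢 n] fun ω => ∑ i ∈ Finset.range n, X i ω :=
      Finset.measurable_sum _ fun i hi =>
        pastFiltration_measurable X hmeas (Finset.mem_range.1 hi)
    exact ((hsum.const_mul t).exp).stronglyMeasurable
  have hintf : ∀ n, Integrable (f n) P := by
    intro n
    have := hindep.integrable_exp_mul_sum (t := t) hmeas
      (s := Finset.range n) (fun i _ => hint_i i)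
    simpa [hf, Finset.sum_apply] using this
  refine supermartingale_nat hadp hintf fun n => ?_
  set g : Ω → ℝ := fun ω => Real.exp (t * X n ω) with hg
  have heq : f (n + 1) = f n * g := by
    funext ω
    simp only [hf, hg, Pi.mul_apply, Finset.sum_range_succ, mul_add, Real.exp_add]
  have h1 : P[f n * g|𝒢 n] =ᵐ[P] f n * P[g|𝒢 n] :=
    condExp_mul_of_stronglyMeasurable_left (hadp n) (heq ▸ hintf (n + 1)) (hint_i n)
  have hgsm : StronglyMeasurable[MeasurableSpace.comap (X n) inferInstance] g := by
    refine Measurable.stronglyMeasurable ?_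
    exact hg_meas.comp (Measurable.of_comap_le le_rfl)
  have h2 : P[g|𝒢 n] =ᵐ[P] fun _ => ∫ ω, g ω ∂P :=
    condExp_indep_eq ((hmeas n).comap_le) (𝒢.le n) hgsm
      (pastFiltration_indep P X hmeas hindep n)
  have h3 : ∫ ω, g ω ∂P = ∫ ω, Real.exp (t * X 0 ω) ∂P :=
    ((hident n).comp hg_meas).integral_eq
  have e0 : P[f (n + 1)|𝒢 n] =ᵐ[P] f n * P[g|𝒢 n] := by rw [heq]; exact h1
  filter_upwards [e0, h2] with ω hω1 hω2
  rw [hω1]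
  simp only [Pi.mul_apply, hω2]
  rw [h3]
  exact mul_le_of_le_one_right (Real.exp_nonneg _) hψ

include hmeas in
lemma ville_exp_sum
    (hindep : iIndepFun X P)
    (hident : ∀ n, IdentDistrib (X n) (X 0) P P) (t : ℝ)
    (hint0 : Integrable (fun ω => Real.exp (t * X 0 ω)) P)
    (hψ : ∫ ω, Real.exp (t * X 0 ω) ∂P ≤ 1) (lam : NNReal) (n : ℕ) :
    lam • P {ω | (lam : ℝ) ≤ (Finset.range (n + 1)).sup' Finset.nonempty_range_add_one
        fun j => Real.exp (t * ∑ i ∈ Finset.range j, X i ω)} ≤ 1 := by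
  set 𝒢 := pastFiltration X hmeas with h𝒢
  set f : ℕ → Ω → ℝ := fun n ω => Real.exp (t * ∑ i ∈ Finset.range n, X i ω) with hf
  have hsup : Supermartingale f 𝒢 P :=
    supermartingale_exp_sum P X hmeas hindep hident t hint0 hψ
  set τ := fun ω => ((hittingBtwn f {y : ℝ | (lam : ℝ) ≤ y} 0 n ω : ℕ) : ℕ∞) with hτdef
  have hτ : IsStoppingTime 𝒢 τ := hsup.stronglyAdapted.adapted.isStoppingTime_hittingBtwn measurableSet_Ici
  have hτ_le : ∀ ω, τ ω ≤ n := fun ω => WithTop.coe_le_coe.2 (hittingBtwn_le ω)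
  have hsv_int : Integrable (stoppedValue f τ) P :=
    integrable_stoppedValue ℕ hτ (fun i => hsup.integrable i) hτ_le
  set A := {ω | (lam : ℝ) ≤ (Finset.range (n + 1)).sup' Finset.nonempty_range_add_one
      fun j => f j ω} with hA
  have hA_meas : MeasurableSet A :=
    measurableSet_le measurable_const (Finset.measurable_range_sup''
      fun j _ => ((hsup.stronglyMeasurable j).measurable.le (𝒢.le j)))
  have hsv_ge : ∀ ω ∈ A, (lam : ℝ) ≤ stoppedValue f τ ω := by
    intro ω hω
    simp only [hA, Set.mem_setOf_eq, Finset.le_sup'_iff, Finset.mem_range,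
      Nat.lt_succ_iff] at hω
    refine stoppedValue_hittingBtwn_mem ?_
    obtain ⟨j, hj1, hj2⟩ := hω
    exact ⟨j, ⟨Nat.zero_le _, hj1⟩, hj2⟩
  have h5 : (lam : ℝ) * (P A).toReal ≤ ∫ ω in A, stoppedValue f τ ω ∂P :=
    by have := setIntegral_ge_of_const_le hA_meas (measure_ne_top _ _) hsv_ge hsv_int.integrableOn
       rwa [smul_eq_mul, mul_comm, measureReal_def] at this
  have h6 : ∫ ω in A, stoppedValue f τ ω ∂P ≤ ∫ ω, stoppedValue f τ ω ∂P :=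
    setIntegral_le_integral hsv_int (Filter.Eventually.of_forall fun ω => Real.exp_nonneg _)
  have h7 : ∫ ω, stoppedValue f τ ω ∂P ≤ 1 := by
    have hmono := hsup.neg.expected_stoppedValue_mono (isStoppingTime_const 𝒢 0) hτ
      (fun ω => WithTop.coe_le_coe.2 (Nat.zero_le _)) hτ_le
    rw [stoppedValue_const] at hmono
    have hsvneg : stoppedValue (-f) τ = fun ω => -stoppedValue f τ ω := rfl
    rw [hsvneg] at hmono
    have hneg : ∫ ω, (-f) 0 ω ∂P ≤ ∫ ω, -stoppedValue f τ ω ∂P := hmono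
    rw [integral_neg] at hneg
    have hf0 : ∫ ω, (-f) 0 ω ∂P = -1 := by
      have : (-f) 0 = fun _ : Ω => (-1 : ℝ) := by
        funext ω; simp [hf]
      rw [this]
      simp
    rw [hf0] at hneg
    linarith
  have hne : (lam • P A) ≠ ⊤ := ENNReal.mul_ne_top (by simp) (measure_ne_top _ _)
  rw [show (1 : ℝ≥0∞) = ENNReal.ofReal 1 by simp,
    ENNReal.le_ofReal_iff_toReal_le hne zero_le_one, ENNReal.toReal_smul]
  rw [NNReal.smul_def, smul_eq_mul]
  exact le_trans h5 (h6.trans h7)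

end Aux2


theorem positive_drift_large_deviation
    {Ω : Type*} [MeasurableSpace Ω] (P : Measure Ω) [IsProbabilityMeasure P]
    (X : ℕ → Ω → ℝ) (hmeas : ∀ n, Measurable (X n))
    (hindep : iIndepFun X P)
    (hident : ∀ n, IdentDistrib (X n) (X 0) P P)
    (hmean : 0 < ∫ ω, X 0 ω ∂P)
    (hmgf : ∃ ε > (0 : ℝ), ∀ t : ℝ, |t| < ε →
      Integrable (fun ω => Real.exp (t * X 0 ω)) P) :
    ∃ c > (0 : ℝ), ∀ k : ℝ, 0 < k →
      P {ω | ∃ n : ℕ, 1 ≤ n ∧ (∑ i ∈ Finset.range n, X i ω) ≤ -k} ≤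
        ENNReal.ofReal (Real.exp (-c * k)) := by
  obtain ⟨ε, hε, hintt⟩ := hmgf
  obtain ⟨c, hc0, hcε, hψlt⟩ := exists_exp_neg_lt_one P (X 0) (hmeas 0) hmean hε hintt
  refine ⟨c, hc0, fun k hk => ?_⟩
  have hint0 : Integrable (fun ω => Real.exp ((-c) * X 0 ω)) P :=
    hintt (-c) (by rw [abs_neg, abs_of_pos hc0]; exact hcε)
  have hψ : ∫ ω, Real.exp ((-c) * X 0 ω) ∂P ≤ 1 := hψlt.le
  set lam : ℝ≥0 := (Real.exp (c * k)).toNNReal with hlamdef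
  have hlam_coe : (lam : ℝ) = Real.exp (c * k) :=
    Real.coe_toNNReal _ (Real.exp_pos _).le
  set B : ℕ → Set Ω := fun n => {ω | (lam : ℝ) ≤ (Finset.range (n + 1)).sup'
      Finset.nonempty_range_add_one
      fun j => Real.exp ((-c) * ∑ i ∈ Finset.range j, X i ω)} with hB
  have hBmono : Monotone B := by
    intro m n hmn ω hω
    simp only [hB, Set.mem_setOf_eq] at hω ⊢
    exact le_trans hω (Finset.sup'_mono _ (Finset.range_subset_range.2 (by omega)) _)
  have hsub : {ω | ∃ n : ℕ, 1 ≤ n ∧ (∑ i ∈ Finset.range n, X i ω) ≤ -k} ⊆ ⋃ n, B n := by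
    rintro ω ⟨n, _, hn2⟩
    refine Set.mem_iUnion.2 ⟨n, ?_⟩
    show (lam : ℝ) ≤ _
    refine le_trans ?_ (Finset.le_sup' _ (Finset.self_mem_range_succ n))
    rw [hlam_coe]
    apply Real.exp_le_exp.2
    nlinarith
  have hville : ∀ n, P (B n) ≤ ENNReal.ofReal (Real.exp (-c * k)) := by
    intro n
    have h := ville_exp_sum P X hmeas hindep hident (-c) hint0 hψ lam n
    have h2 : P (B n) ≤ (lam : ℝ≥0∞)⁻¹ := by
      rw [ENNReal.le_inv_iff_mul_le, mul_comm]
      rw [ENNReal.smul_def, smul_eq_mul] at h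
      exact h
    refine h2.trans ?_
    have hcoe : (lam : ℝ≥0∞) = ENNReal.ofReal (Real.exp (c * k)) := rfl
    rw [hcoe, ← ENNReal.ofReal_inv_of_pos (Real.exp_pos _), ← Real.exp_neg, neg_mul]
  calc P {ω | ∃ n : ℕ, 1 ≤ n ∧ (∑ i ∈ Finset.range n, X i ω) ≤ -k}
      ≤ P (⋃ n, B n) := measure_mono hsub
  _ = ⨆ n, P (B n) := hBmono.directed_le.measure_iUnion
  _ ≤ ENNReal.ofReal (Real.exp (-c * k)) := iSup_le hville
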